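/- Consider the cycle graph on n ≥ 3 nodes and let P̂ be the 2n × 2n transition matrix of the non-backtracking edge walk: directed edge {i,j} transitions with probability 1 to the unique directed edge {u,i} with u ∈ N(i)\{j}. Let P̂⋆ be its Cesàro limit. Then the Cesàro mixing time τ⋆ = sup_{t≥0} ‖∑_{τ=0}^t (P̂^τ − P̂⋆)‖ (operator norm induced by ‖x‖₂/√(2n)) satisfies τ⋆ ≤ n/√2. -/

import Mathlib

open Filter Finset
open Fin.NatCast

/-- Directed edges of the cycle on n nodes: a position together with an
orientation (clockwise / counter-clockwise). -/
abbrev CycleEdge (n : ℕ) := Fin n × Bool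

/-- The non-backtracking edge walk on the cycle is deterministic: the directed
edge at position i with orientation b moves to position i±1 with the same
orientation. -/
def cycleStep (n : ℕ) [NeZero n] (e : CycleEdge n) : CycleEdge n :=
  (if e.2 then e.1 + 1 else e.1 - 1, e.2)

/-- Transition matrix of the non-backtracking edge walk on the cycle. -/
noncomputable def cycleP (n : ℕ) [NeZero n] :
    Matrix (CycleEdge n) (CycleEdge n) ℝ :=
  fun e f => if f = cycleStep n e then 1 else 0

/-- The scaled Euclidean norm ‖x‖₂/√(2n) on ℝ^{2n}. -/
noncomputable def scaledNorm2 (n : ℕ) (x : CycleEdge n → ℝ) : ℝ :=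
  Real.sqrt ((∑ e, (x e) ^ 2) / (2 * n))

lemma cycleP_pow (n : ℕ) [NeZero n] (τ : ℕ) (e f : CycleEdge n) :
    (cycleP n ^ τ) e f
      = if f = ((if e.2 then e.1 + (τ : Fin n) else e.1 - (τ : Fin n)), e.2) then 1 else 0 := by
  induction τ generalizing f with
  | zero =>
      simp only [pow_zero, Matrix.one_apply, Nat.cast_zero, add_zero, sub_zero, ite_self,
        Prod.mk.eta]
      exact if_congr eq_comm rfl rfl
  | succ τ ih =>
      rw [pow_succ, Matrix.mul_apply]
      have h : ∀ g : CycleEdge n, (cycleP n ^ τ) e g * cycleP n g f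
          = if g = ((if e.2 then e.1 + (τ : Fin n) else e.1 - (τ : Fin n)), e.2)
            then cycleP n g f else 0 := by
        intro g; rw [ih]; split <;> simp
      simp_rw [h, Finset.sum_ite_eq', Finset.mem_univ, if_true]
      rw [cycleP]
      have hcast : ((τ + 1 : ℕ) : Fin n) = (τ : Fin n) + 1 := by push_cast; ring
      rcases e with ⟨i, b⟩
      cases b <;> simp [cycleStep, hcast, add_assoc, sub_sub]

lemma cycleP_pow_n (n : ℕ) [NeZero n] : (cycleP n) ^ n = 1 := by
  ext e f
  rw [cycleP_pow]
  simp only [Fin.natCast_self, add_zero, sub_zero, ite_self, Prod.mk.eta, Matrix.one_apply]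
  exact if_congr eq_comm rfl rfl

/-- the orientation-block matrix J -/
noncomputable def cycleJ (n : ℕ) : Matrix (CycleEdge n) (CycleEdge n) ℝ :=
  fun e f => if f.2 = e.2 then 1 else 0

lemma sum_pow_range_n (n : ℕ) [NeZero n] :
    ∑ τ ∈ range n, (cycleP n) ^ τ = cycleJ n := by
  ext e f
  rw [Matrix.sum_apply]
  simp_rw [cycleP_pow]
  rw [← Fin.sum_univ_eq_sum_range
    (fun τ => if f = ((if e.2 then e.1 + (τ : Fin n) else e.1 - (τ : Fin n)), e.2) then (1:ℝ) else 0)]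
  simp_rw [Fin.cast_val_eq_self]
  rcases e with ⟨i, b⟩; rcases f with ⟨j, c⟩
  rcases Bool.eq_false_or_eq_true c <;> rcases Bool.eq_false_or_eq_true b <;>
    subst_vars <;> simp [cycleJ, Prod.ext_iff]
  · have h : ∀ x : Fin n, (j = i + x) ↔ (x = j - i) := fun x => by
      rw [eq_sub_iff_add_eq, add_comm, eq_comm]
    simp only [h, Finset.filter_eq', Finset.mem_univ, if_true, Finset.card_singleton]
  · have h : ∀ x : Fin n, (j = i - x) ↔ (x = i - j) := fun x => by
      rw [eq_sub_iff_add_eq, eq_sub_iff_add_eq, add_comm]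
    simp only [h, Finset.filter_eq', Finset.mem_univ, if_true, Finset.card_singleton]

lemma sum_pow_range_mul (n : ℕ) [NeZero n] (k : ℕ) :
    ∑ τ ∈ range (n * k), (cycleP n) ^ τ = k • cycleJ n := by
  induction k with
  | zero => simp
  | succ k ih =>
      have : n * (k + 1) = n * k + n := by ring
      rw [this, Finset.sum_range_add, ih]
      have h2 : ∀ i : ℕ, (cycleP n) ^ (n * k + i) = (cycleP n) ^ i := by
        intro i
        rw [pow_add, pow_mul, cycleP_pow_n, one_pow, one_mul]
      simp_rw [h2, sum_pow_range_n, succ_nsmul]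

lemma Pstar_eq (n : ℕ) [NeZero n]
    (Pstar : Matrix (CycleEdge n) (CycleEdge n) ℝ)
    (hces : Tendsto (fun t : ℕ => (t : ℝ)⁻¹ • ∑ τ ∈ range t, cycleP n ^ τ)
      atTop (nhds Pstar)) :
    Pstar = (n : ℝ)⁻¹ • cycleJ n := by
  have hnn : (0:ℝ) < n := by exact_mod_cast Nat.pos_of_ne_zero (NeZero.ne n)
  have hmono : Tendsto (fun k : ℕ => n * k) atTop atTop := by
    apply Filter.tendsto_atTop_atTop.mpr
    intro b
    exact ⟨b, fun a ha => le_trans ha (Nat.le_mul_of_pos_left a (Nat.pos_of_ne_zero (NeZero.ne n)))⟩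
  have h2 := hces.comp hmono
  have h3 : (fun k : ℕ => ((n * k : ℕ) : ℝ)⁻¹ • ∑ τ ∈ range (n * k), cycleP n ^ τ)
      =ᶠ[atTop] (fun _ : ℕ => (n : ℝ)⁻¹ • cycleJ n) := by
    filter_upwards [Filter.eventually_ge_atTop 1] with k hk
    rw [sum_pow_range_mul]
    have hk0 : (0:ℝ) < k := by exact_mod_cast hk
    rw [← Nat.cast_smul_eq_nsmul ℝ, smul_smul]
    congr 1
    push_cast
    field_simp
  have h4 : Tendsto (fun _ : ℕ => (n : ℝ)⁻¹ • cycleJ n) atTop (nhds Pstar) :=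
    Filter.Tendsto.congr' h3 h2
  exact tendsto_nhds_unique h4 tendsto_const_nhds

lemma partial_sum_period (n : ℕ) [NeZero n] (m : ℕ) :
    ∑ τ ∈ range (n + m), (cycleP n ^ τ - (n : ℝ)⁻¹ • cycleJ n)
      = ∑ τ ∈ range m, (cycleP n ^ τ - (n : ℝ)⁻¹ • cycleJ n) := by
  rw [Finset.sum_range_add]
  have h0 : ∑ τ ∈ range n, (cycleP n ^ τ - (n : ℝ)⁻¹ • cycleJ n) = 0 := by
    rw [Finset.sum_sub_distrib, sum_pow_range_n, Finset.sum_const, Finset.card_range]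
    rw [← Nat.cast_smul_eq_nsmul ℝ, smul_smul]
    rw [mul_inv_cancel₀ (by exact_mod_cast (NeZero.ne n) : ((n:ℕ):ℝ) ≠ 0)]
    simp
  rw [h0, zero_add]
  apply Finset.sum_congr rfl
  intro i _
  rw [pow_add, cycleP_pow_n, one_mul]

lemma partial_sum_mod (n : ℕ) [NeZero n] (m : ℕ) :
    ∑ τ ∈ range m, (cycleP n ^ τ - (n : ℝ)⁻¹ • cycleJ n)
      = ∑ τ ∈ range (m % n), (cycleP n ^ τ - (n : ℝ)⁻¹ • cycleJ n) := by
  have key : ∀ q r : ℕ, ∑ τ ∈ range (n * q + r), (cycleP n ^ τ - (n : ℝ)⁻¹ • cycleJ n)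
      = ∑ τ ∈ range r, (cycleP n ^ τ - (n : ℝ)⁻¹ • cycleJ n) := by
    intro q
    induction q with
    | zero => simp
    | succ q ih =>
        intro r
        have : n * (q + 1) + r = n + (n * q + r) := by ring
        rw [this, partial_sum_period, ih]
  have hm : m = n * (m / n) + m % n := (Nat.div_add_mod m n).symm
  conv_lhs => rw [hm]
  rw [key]

noncomputable def wfun (n r k : ℕ) : ℝ := (if k < r then 1 else 0) - (r : ℝ) / n

def cdelta (n : ℕ) [NeZero n] (e f : CycleEdge n) : Fin n :=
  if e.2 then f.1 - e.1 else e.1 - f.1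

lemma Sr_apply (n : ℕ) [NeZero n] (r : ℕ) (hr : r ≤ n) (e f : CycleEdge n) :
    (∑ τ ∈ range r, (cycleP n ^ τ - (n : ℝ)⁻¹ • cycleJ n)) e f
      = if f.2 = e.2 then wfun n r (cdelta n e f).val else 0 := by
  rw [Matrix.sum_apply]
  simp_rw [Matrix.sub_apply, Matrix.smul_apply, cycleP_pow]
  rw [Finset.sum_sub_distrib, Finset.sum_const, Finset.card_range]
  by_cases h : f.2 = e.2
  · have hδ : ∀ τ ∈ range r,
        (f = ((if e.2 then e.1 + (τ : Fin n) else e.1 - (τ : Fin n)), e.2))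
          ↔ τ = (cdelta n e f).val := by
      intro τ hτ
      have hτn : τ < n := lt_of_lt_of_le (Finset.mem_range.mp hτ) hr
      constructor
      · intro hfe
        have h1 : cdelta n e f = (τ : Fin n) := by
          rw [hfe, cdelta]
          rcases Bool.eq_false_or_eq_true e.2 with hb | hb <;> simp [hb]
        rw [h1, Fin.val_cast_of_lt hτn]
      · intro hτδ
        have h1 : (τ : Fin n) = cdelta n e f := by
          rw [hτδ, Fin.cast_val_eq_self]
        refine Prod.ext ?_ (by simpa using h)
        rw [h1, cdelta]
        rcases Bool.eq_false_or_eq_true e.2 with hb | hb <;> simp [hb]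
    rw [Finset.sum_congr rfl (fun τ hτ => if_congr (hδ τ hτ) rfl rfl)]
    rw [Finset.sum_ite_eq' (range r) ((cdelta n e f).val) (fun _ => (1:ℝ))]
    simp only [Finset.mem_range, cycleJ, h, if_true, mul_one, nsmul_eq_mul, wfun]
    rw [div_eq_mul_inv]
    norm_num
  · have hne : ∀ τ : ℕ, ¬ (f = ((if e.2 then e.1 + (τ : Fin n) else e.1 - (τ : Fin n)), e.2)) := by
      intro τ hfe
      exact h (by rw [hfe])
    simp [hne, cycleJ, h]

lemma row_sum_eq (n : ℕ) [NeZero n] (r : ℕ) (hr : r ≤ n) (e : CycleEdge n) :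
    ∑ f, |(∑ τ ∈ range r, (cycleP n ^ τ - (n : ℝ)⁻¹ • cycleJ n)) e f|
      = ∑ k ∈ range n, |wfun n r k| := by
  simp_rw [Sr_apply n r hr e]
  rw [Fintype.sum_prod_type]
  simp_rw [Fintype.sum_bool]
  rcases Bool.eq_false_or_eq_true e.2 with hb | hb <;> rw [hb] <;>
    simp only [if_true, if_false, cdelta, hb, abs_zero, add_zero, zero_add,
      Bool.true_eq_false, Bool.false_eq_true, if_neg (by simp : ¬False)]
  · rw [← Fin.sum_univ_eq_sum_range (fun k => |wfun n r k|) n]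
    exact Fintype.sum_equiv (Equiv.subRight e.1) _ _ (fun x => rfl)
  · rw [← Fin.sum_univ_eq_sum_range (fun k => |wfun n r k|) n]
    exact Fintype.sum_equiv (Equiv.subLeft e.1) _ _ (fun x => rfl)

lemma wsum_le (n r : ℕ) [NeZero n] (hr : r ≤ n) :
    ∑ k ∈ range n, |wfun n r k| ≤ (n : ℝ) / 2 := by
  have hn : (0:ℝ) < n := by exact_mod_cast Nat.pos_of_ne_zero (NeZero.ne n)
  have hrn : (r:ℝ) ≤ n := by exact_mod_cast hr
  have hrange : range n = range (r + (n - r)) := by congr 1; omega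
  rw [hrange, Finset.sum_range_add]
  have h1 : ∀ k ∈ range r, |wfun n r k| = 1 - (r:ℝ)/n := by
    intro k hk
    rw [wfun, if_pos (Finset.mem_range.mp hk)]
    exact abs_of_nonneg (by rw [sub_nonneg]; exact div_le_one_of_le₀ hrn hn.le)
  have h2 : ∀ i ∈ range (n - r), |wfun n r (r + i)| = (r:ℝ)/n := by
    intro i _
    rw [wfun, if_neg (by omega), zero_sub, abs_neg]
    exact abs_of_nonneg (div_nonneg (Nat.cast_nonneg r) hn.le)
  rw [Finset.sum_congr rfl h1, Finset.sum_congr rfl h2,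
    Finset.sum_const, Finset.sum_const, Finset.card_range, Finset.card_range,
    nsmul_eq_mul, nsmul_eq_mul, Nat.cast_sub hr]
  have h3 : (r:ℝ)/n * n = r := div_mul_cancel₀ _ hn.ne'
  have h4 : (r:ℝ) * ((r:ℝ)/n) = (n:ℝ) * ((r:ℝ)/n)^2 := by field_simp
  nlinarith [h3, h4, mul_nonneg hn.le (sq_nonneg (2*((r:ℝ)/n) - 1))]

lemma col_sum_eq (n : ℕ) [NeZero n] (r : ℕ) (hr : r ≤ n) (f : CycleEdge n) :
    ∑ e, |(∑ τ ∈ range r, (cycleP n ^ τ - (n : ℝ)⁻¹ • cycleJ n)) e f|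
      = ∑ k ∈ range n, |wfun n r k| := by
  simp_rw [Sr_apply n r hr]
  rw [Fintype.sum_prod_type]
  simp_rw [Fintype.sum_bool]
  rcases Bool.eq_false_or_eq_true f.2 with hb | hb <;> rw [hb] <;>
    simp only [if_true, if_false, cdelta, hb, abs_zero, add_zero, zero_add,
      Bool.true_eq_false, Bool.false_eq_true, if_neg (by simp : ¬False),
      if_pos rfl]
  · rw [← Fin.sum_univ_eq_sum_range (fun k => |wfun n r k|) n]
    exact Fintype.sum_equiv (Equiv.subLeft f.1) _ _ (fun x => rfl)
  · rw [← Fin.sum_univ_eq_sum_range (fun k => |wfun n r k|) n]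
    exact Fintype.sum_equiv (Equiv.subRight f.1) _ _ (fun x => rfl)

lemma schur_bound {ι : Type*} [Fintype ι] (B : Matrix ι ι ℝ) (C : ℝ) (hC : 0 ≤ C)
    (hrow : ∀ e, ∑ f, |B e f| ≤ C) (hcol : ∀ f, ∑ e, |B e f| ≤ C) (x : ι → ℝ) :
    ∑ e, (B.mulVec x e) ^ 2 ≤ C ^ 2 * ∑ f, (x f) ^ 2 := by
  have key : ∀ e, (B.mulVec x e) ^ 2 ≤ C * ∑ f, |B e f| * x f ^ 2 := by
    intro e
    have h1 : |B.mulVec x e| ≤ ∑ f, |B e f| * |x f| := by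
      rw [Matrix.mulVec, dotProduct]
      refine (Finset.abs_sum_le_sum_abs _ _).trans ?_
      simp [abs_mul]
    have hcs := Finset.sum_mul_sq_le_sq_mul_sq Finset.univ
      (fun f => Real.sqrt |B e f|) (fun f => Real.sqrt |B e f| * |x f|)
    have e1 : ∀ f : ι, Real.sqrt |B e f| * (Real.sqrt |B e f| * |x f|) = |B e f| * |x f| := by
      intro f; rw [← mul_assoc, Real.mul_self_sqrt (abs_nonneg _)]
    have e2 : ∀ f : ι, (Real.sqrt |B e f|) ^ 2 = |B e f| :=
      fun f => Real.sq_sqrt (abs_nonneg _)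
    have e3 : ∀ f : ι, (Real.sqrt |B e f| * |x f|) ^ 2 = |B e f| * x f ^ 2 := by
      intro f; rw [mul_pow, Real.sq_sqrt (abs_nonneg _), sq_abs]
    simp_rw [e1, e2, e3] at hcs
    have h2 : (B.mulVec x e) ^ 2 ≤ (∑ f, |B e f| * |x f|) ^ 2 := by
      rw [← sq_abs (B.mulVec x e)]
      exact pow_le_pow_left₀ (abs_nonneg _) h1 2
    refine h2.trans (hcs.trans ?_)
    exact mul_le_mul_of_nonneg_right (hrow e)
      (Finset.sum_nonneg fun f _ => mul_nonneg (abs_nonneg _) (sq_nonneg _))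
  calc ∑ e, (B.mulVec x e) ^ 2
      ≤ ∑ e, C * ∑ f, |B e f| * x f ^ 2 := Finset.sum_le_sum fun e _ => key e
    _ = C * ∑ f, (∑ e, |B e f|) * x f ^ 2 := by
        rw [← Finset.mul_sum, Finset.sum_comm]
        simp_rw [Finset.sum_mul]
    _ ≤ C * ∑ f, C * x f ^ 2 := by
        refine mul_le_mul_of_nonneg_left (Finset.sum_le_sum fun f _ => ?_) hC
        exact mul_le_mul_of_nonneg_right (hcol f) (sq_nonneg _)
    _ = C ^ 2 * ∑ f, (x f) ^ 2 := by rw [← Finset.mul_sum]; ring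


/-- For the cycle with n nodes, the Cesàro mixing time of the non-backtracking
edge walk satisfies τ⋆ ≤ n/√2. -/
theorem stmt_18 (n : ℕ) [NeZero n] (hn : 3 ≤ n)
    (Pstar : Matrix (CycleEdge n) (CycleEdge n) ℝ)
    (hces : Tendsto (fun t : ℕ => (t : ℝ)⁻¹ • ∑ τ ∈ range t, cycleP n ^ τ)
      atTop (nhds Pstar)) :
    ∀ t : ℕ, ∀ x : CycleEdge n → ℝ,
      scaledNorm2 n ((∑ τ ∈ range (t + 1), (cycleP n ^ τ - Pstar)).mulVec x)
        ≤ (n / Real.sqrt 2) * scaledNorm2 n x := by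
  intro t x
  have hP : Pstar = (n : ℝ)⁻¹ • cycleJ n := Pstar_eq n Pstar hces
  rw [hP, partial_sum_mod]
  set r := (t + 1) % n with hrdef
  have hr : r ≤ n := (Nat.mod_lt _ (Nat.pos_of_ne_zero (NeZero.ne n))).le
  set B := ∑ τ ∈ range r, (cycleP n ^ τ - (n : ℝ)⁻¹ • cycleJ n) with hB
  have hnn : (0:ℝ) ≤ n := Nat.cast_nonneg n
  have h2n : (0:ℝ) < 2 * n := by
    have : (0:ℝ) < n := by exact_mod_cast Nat.pos_of_ne_zero (NeZero.ne n)
    linarith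
  have hrow : ∀ e, ∑ f, |B e f| ≤ (n : ℝ) / 2 :=
    fun e => (row_sum_eq n r hr e).le.trans (wsum_le n r hr)
  have hcol : ∀ f, ∑ e, |B e f| ≤ (n : ℝ) / 2 :=
    fun f => (col_sum_eq n r hr f).le.trans (wsum_le n r hr)
  have hschur := schur_bound B ((n : ℝ) / 2) (by positivity) hrow hcol x
  have hsq2 : Real.sqrt 2 ≤ 2 := by
    nlinarith [Real.sq_sqrt (by norm_num : (0:ℝ) ≤ 2), Real.sqrt_nonneg 2]
  have hsq2pos : (0:ℝ) < Real.sqrt 2 := Real.sqrt_pos.mpr (by norm_num)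
  have hCle : (n : ℝ) / 2 ≤ (n : ℝ) / Real.sqrt 2 :=
    div_le_div_of_nonneg_left hnn hsq2pos hsq2
  have hC2 : ((n : ℝ) / 2) ^ 2 ≤ ((n : ℝ) / Real.sqrt 2) ^ 2 :=
    pow_le_pow_left₀ (by positivity) hCle 2
  have hxs : (0:ℝ) ≤ ∑ f, (x f) ^ 2 := Finset.sum_nonneg fun f _ => sq_nonneg _
  have hA : (∑ e, (B.mulVec x e) ^ 2) / (2 * n)
      ≤ ((n : ℝ) / Real.sqrt 2) ^ 2 * ((∑ f, (x f) ^ 2) / (2 * n)) := by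
    calc (∑ e, (B.mulVec x e) ^ 2) / (2 * n)
        ≤ (((n : ℝ) / 2) ^ 2 * ∑ f, (x f) ^ 2) / (2 * n) :=
          div_le_div_of_nonneg_right hschur h2n.le
      _ = ((n : ℝ) / 2) ^ 2 * ((∑ f, (x f) ^ 2) / (2 * n)) := by ring
      _ ≤ ((n : ℝ) / Real.sqrt 2) ^ 2 * ((∑ f, (x f) ^ 2) / (2 * n)) :=
          mul_le_mul_of_nonneg_right hC2 (div_nonneg hxs h2n.le)
  rw [scaledNorm2, scaledNorm2]
  calc Real.sqrt ((∑ e, (B.mulVec x e) ^ 2) / (2 * n))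
      ≤ Real.sqrt (((n : ℝ) / Real.sqrt 2) ^ 2 * ((∑ f, (x f) ^ 2) / (2 * n))) :=
        Real.sqrt_le_sqrt hA
    _ = ((n : ℝ) / Real.sqrt 2) * Real.sqrt ((∑ f, (x f) ^ 2) / (2 * n)) := by
        rw [Real.sqrt_mul (sq_nonneg _), Real.sqrt_sq (by positivity)]
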